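/- For any real 0 < α ≤ 1 and every n ≥ 1, the Sylvester sequence satisfies s_n(α) ≥ s_n(1), where s_n(1) is the Sylvester sequence of 1 (i.e., 2, 3, 7, 43, …). Consequently s_n(α) ≥ (n−1)! + 1. -/
import Mathlib


/-- The Sylvester sequence of `α`: `sylv α n` is the `(n+1)`-st term `s_{n+1}(α)`,
the least integer strictly greater than the reciprocal of the remainder
`α - 1/s_1 - ⋯ - 1/s_n`. -/
noncomputable def sylv (α : ℝ) : ℕ → ℤ
  | 0 => ⌊1/α⌋ + 1
  | n + 1 => ⌊(α - ∑ j ∈ (Finset.range (n+1)).attach, (1:ℝ)/(sylv α j.1))⁻¹⌋ + 1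
decreasing_by exact Finset.mem_range.mp j.2

/-- The remainder after `n` steps. -/
noncomputable def sylvR (α : ℝ) (n : ℕ) : ℝ := α - ∑ j ∈ Finset.range n, (1:ℝ)/(sylv α j)

lemma sylvR_zero (α : ℝ) : sylvR α 0 = α := by simp [sylvR]

lemma sylvR_succ (α : ℝ) (n : ℕ) : sylvR α (n+1) = sylvR α n - 1/(sylv α n) := by
  simp [sylvR, Finset.sum_range_succ]; ring

lemma sylv_eq_floor (α : ℝ) (n : ℕ) : sylv α n = ⌊(sylvR α n)⁻¹⌋ + 1 := by
  cases n with
  | zero => rw [sylv]; simp [sylvR, one_div]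
  | succ n =>
    rw [sylv, sylvR, Finset.sum_attach (Finset.range (n+1)) (fun j => (1:ℝ)/(sylv α j))]

lemma sylv_step (α : ℝ) {n : ℕ} (h0 : 0 < sylvR α n) (h1 : sylvR α n ≤ 1) :
    2 ≤ sylv α n ∧ 0 < sylvR α (n+1) ∧
      sylvR α (n+1) ≤ 1/((sylv α n : ℝ) * ((sylv α n : ℝ) - 1)) := by
  have hfe := sylv_eq_floor α n
  have hinv1 : (1:ℝ) ≤ (sylvR α n)⁻¹ := by
    rw [le_inv_comm₀ one_pos h0]; simpa using h1
  have hfl : (1:ℤ) ≤ ⌊(sylvR α n)⁻¹⌋ := by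
    exact_mod_cast Int.le_floor.mpr (by exact_mod_cast hinv1)
  have hs2 : 2 ≤ sylv α n := by omega
  have hsR : (sylv α n : ℝ) ≥ 2 := by exact_mod_cast hs2
  have hspos : (0:ℝ) < (sylv α n : ℝ) := by linarith
  have hlt : (sylvR α n)⁻¹ < (sylv α n : ℝ) := by
    rw [hfe]; push_cast; exact Int.lt_floor_add_one _
  have hle : ((sylv α n : ℝ) - 1) ≤ (sylvR α n)⁻¹ := by
    rw [hfe]; push_cast
    have := Int.floor_le ((sylvR α n)⁻¹)
    linarith
  -- 1/s < R n
  have hRn_gt : ((sylv α n : ℝ))⁻¹ < sylvR α n := by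
    rw [inv_lt_comm₀ hspos h0]; exact hlt
  -- R n ≤ 1/(s-1)
  have hRn_le : sylvR α n ≤ ((sylv α n : ℝ) - 1)⁻¹ :=
    (le_inv_comm₀ (by linarith) h0).mp hle
  refine ⟨hs2, ?_, ?_⟩
  · rw [sylvR_succ]
    have : (1:ℝ)/(sylv α n) = ((sylv α n : ℝ))⁻¹ := one_div _
    linarith
  · rw [sylvR_succ]
    simp only [one_div]
    have hne1 : ((sylv α n : ℝ)) ≠ 0 := by linarith
    have hne2 : ((sylv α n : ℝ) - 1) ≠ 0 := by linarith
    have h1s : ((sylv α n : ℝ) - 1)⁻¹ - ((sylv α n : ℝ))⁻¹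
        = ((sylv α n : ℝ) * ((sylv α n : ℝ) - 1))⁻¹ := by
      rw [eq_comm, inv_eq_iff_eq_inv, eq_comm, inv_eq_one_div]
      field_simp
      ring
    have : (1:ℝ)/(sylv α n) = ((sylv α n : ℝ))⁻¹ := one_div _
    linarith [h1s, hRn_le]

lemma sylvR_inv (α : ℝ) (hα0 : 0 < α) (hα1 : α ≤ 1) (n : ℕ) :
    0 < sylvR α n ∧ sylvR α n ≤ 1 := by
  induction n with
  | zero => rw [sylvR_zero]; exact ⟨hα0, hα1⟩
  | succ n ih =>
    obtain ⟨hs2, hpos, hle⟩ := sylv_step α ih.1 ih.2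
    have hsR : (sylv α n : ℝ) ≥ 2 := by exact_mod_cast hs2
    refine ⟨hpos, ?_⟩
    have h2 : (2:ℝ) ≤ (sylv α n : ℝ) * ((sylv α n : ℝ) - 1) := by nlinarith
    have : 1/((sylv α n : ℝ) * ((sylv α n : ℝ) - 1)) ≤ 1 := by
      rw [div_le_one (by linarith)]; linarith
    linarith

lemma sylv_two_le (α : ℝ) (hα0 : 0 < α) (hα1 : α ≤ 1) (n : ℕ) : 2 ≤ sylv α n :=
  (sylv_step α (sylvR_inv α hα0 hα1 n).1 (sylvR_inv α hα0 hα1 n).2).1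

lemma sylv_growth (α : ℝ) (hα0 : 0 < α) (hα1 : α ≤ 1) (n : ℕ) :
    sylv α n * (sylv α n - 1) + 1 ≤ sylv α (n+1) := by
  obtain ⟨hs2, hpos, hle⟩ := sylv_step α (sylvR_inv α hα0 hα1 n).1 (sylvR_inv α hα0 hα1 n).2
  have hsR : (sylv α n : ℝ) ≥ 2 := by exact_mod_cast hs2
  have hMpos : (0:ℝ) < (sylv α n : ℝ) * ((sylv α n : ℝ) - 1) := by nlinarith
  have hkey : ((sylv α n : ℝ) * ((sylv α n : ℝ) - 1)) ≤ (sylvR α (n+1))⁻¹ := by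
    rw [one_div] at hle
    exact (le_inv_comm₀ hpos hMpos).mp hle
  have : sylv α n * (sylv α n - 1) ≤ ⌊(sylvR α (n+1))⁻¹⌋ := by
    apply Int.le_floor.mpr
    push_cast
    exact hkey
  rw [sylv_eq_floor α (n+1)]
  omega

lemma sylv_one_R (n : ℕ) : sylvR 1 n = ((sylv 1 n : ℝ) - 1)⁻¹ ∧ 2 ≤ sylv 1 n := by
  induction n with
  | zero =>
    constructor
    · rw [sylvR_zero]
      rw [show sylv 1 0 = 2 by rw [sylv]; norm_num]
      norm_num
    · rw [sylv]; norm_num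
  | succ n ih =>
    obtain ⟨hR, hs2⟩ := ih
    have hsR : (sylv 1 n : ℝ) ≥ 2 := by exact_mod_cast hs2
    have hne1 : ((sylv 1 n : ℝ)) ≠ 0 := by linarith
    have hne2 : ((sylv 1 n : ℝ) - 1) ≠ 0 := by linarith
    have hstep : sylvR 1 (n+1) = ((sylv 1 n : ℝ) * ((sylv 1 n : ℝ) - 1))⁻¹ := by
      rw [sylvR_succ, hR, one_div]
      rw [eq_comm, inv_eq_iff_eq_inv, eq_comm, inv_eq_one_div]
      field_simp
      ring
    have hval : sylv 1 (n+1) = sylv 1 n * (sylv 1 n - 1) + 1 := by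
      rw [sylv_eq_floor, hstep, inv_inv]
      have : ((sylv 1 n : ℝ) * ((sylv 1 n : ℝ) - 1)) = ((sylv 1 n * (sylv 1 n - 1) : ℤ) : ℝ) := by
        push_cast; ring
      rw [this, Int.floor_intCast]
    constructor
    · rw [hstep, hval]
      push_cast
      ring_nf
    · have : 2 ≤ sylv 1 n * (sylv 1 n - 1) + 1 := by nlinarith
      omega

lemma sylv_one_succ (n : ℕ) : sylv 1 (n+1) = sylv 1 n * (sylv 1 n - 1) + 1 := by
  obtain ⟨hR, hs2⟩ := sylv_one_R n
  have hsR : (sylv 1 n : ℝ) ≥ 2 := by exact_mod_cast hs2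
  have hne1 : ((sylv 1 n : ℝ)) ≠ 0 := by linarith
  have hne2 : ((sylv 1 n : ℝ) - 1) ≠ 0 := by linarith
  have hstep : sylvR 1 (n+1) = ((sylv 1 n : ℝ) * ((sylv 1 n : ℝ) - 1))⁻¹ := by
    rw [sylvR_succ, hR, one_div]
    rw [eq_comm, inv_eq_iff_eq_inv, eq_comm, inv_eq_one_div]
    field_simp
    ring
  rw [sylv_eq_floor, hstep, inv_inv]
  have : ((sylv 1 n : ℝ) * ((sylv 1 n : ℝ) - 1)) = ((sylv 1 n * (sylv 1 n - 1) : ℤ) : ℝ) := by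
    push_cast; ring
  rw [this, Int.floor_intCast]

theorem sylvester_ge_sylvester_one (α : ℝ) (hα0 : 0 < α) (hα1 : α ≤ 1) (n : ℕ) :
    sylv 1 n ≤ sylv α n ∧ (n.factorial : ℤ) + 1 ≤ sylv α n := by
  induction n with
  | zero =>
    have h2 := sylv_two_le α hα0 hα1 0
    have h1 : sylv 1 0 = 2 := by rw [sylv]; norm_num
    simp [h1, Nat.factorial]
    omega
  | succ n ih =>
    obtain ⟨hmono, hfac⟩ := ih
    have ha2 : 2 ≤ sylv 1 n := (sylv_one_R n).2
    have hb2 : 2 ≤ sylv α n := sylv_two_le α hα0 hα1 n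
    have hgrow := sylv_growth α hα0 hα1 n
    have hone := sylv_one_succ n
    constructor
    · rw [hone]
      nlinarith [hgrow, hmono, ha2]
    · have hfn : (n:ℤ) ≤ (n.factorial : ℤ) := by exact_mod_cast Nat.self_le_factorial n
      have hf1 : (1:ℤ) ≤ (n.factorial : ℤ) := by exact_mod_cast Nat.one_le_iff_ne_zero.mpr n.factorial_ne_zero
      have : ((n+1).factorial : ℤ) = ((n:ℤ)+1) * (n.factorial : ℤ) := by
        push_cast [Nat.factorial_succ]; ring
      rw [this]
      nlinarith [hgrow, hfac, hfn, hf1]
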